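/- arXiv:1411.2044 — 2 statements merged into one kernel-verified Lean document; each statement's English description precedes it below -/
import Mathlib

section
/- For k ≥ 2, j ≥ 0, and 1 ≤ i ≤ k, define G_{(k-1)j+i}(q) = [∑_{λ≥0} (-1)^λ q^{(2k+1)·C(λ,2)+(k(j+1)+i)λ}(1−q^{λ+1})⋯(1−q^{λ+j})(1−q^{(k-i+1)(2λ+j+1)})] / ∏_{n≥1}(1−q^n). Then if 1 ≤ i ≤ k−1, G_{(k-1)j+i}(q) = 1 + q^{j+1} + (higher order terms), and if i = k, G_{(k-1)j+k}(q) = 1 + q^{j+2} + (higher order terms); in particular G_{(k-1)j+i}(q) − 1 ∈ q^{j+1}ℤ[[q]] for i < k and ∈ q^{j+2}ℤ[[q]] for i = k. -/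
open PowerSeries Finset

/-- Truncation-based formal infinite product `∏_{m, P m} (1 - q^m)` in `ℚ⟦q⟧`
(valid when `P m → 1 ≤ m`). -/
noncomputable def sProd (P : ℕ → Prop) [DecidablePred P] : PowerSeries ℚ :=
  PowerSeries.mk fun d =>
    PowerSeries.coeff d (∏ m ∈ (Finset.range (d + 1)).filter P, (1 - PowerSeries.X ^ m))

/-- Truncation-based formal infinite sum `∑_{n ≥ 0} f n` in `ℚ⟦q⟧`
(valid when the order of `f n` is at least `n`). -/
noncomputable def sSum (f : ℕ → PowerSeries ℚ) : PowerSeries ℚ :=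
  PowerSeries.mk fun d =>
    PowerSeries.coeff d (∑ n ∈ Finset.range (d + 1), f n)

/-- The Lepowsky–Zhu closed form for Gordon's identities:
`[∑_{λ ≥ 0} (-1)^λ q^{(2k+1)·C(λ,2)+(k(j+1)+i)λ} (1-q^{λ+1})⋯(1-q^{λ+j})
  (1-q^{(k-i+1)(2λ+j+1)})] / ∏_{n ≥ 1}(1-q^n)`. -/
noncomputable def GordonCf (k j i : ℕ) : PowerSeries ℚ :=
  (sProd (fun m => 1 ≤ m))⁻¹ * sSum (fun l =>
    (-1 : PowerSeries ℚ) ^ l *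
    PowerSeries.X ^ ((2 * k + 1) * l.choose 2 + (k * (j + 1) + i) * l) *
    (∏ t ∈ Finset.Icc 1 j, (1 - PowerSeries.X ^ (l + t))) *
    (1 - PowerSeries.X ^ ((k - i + 1) * (2 * l + j + 1))))
namespace GordonAux

lemma coeff_zero_of_X_pow_dvd {f : PowerSeries ℤ} {n d : ℕ}
    (h : (X : PowerSeries ℤ) ^ n ∣ f) (hd : d < n) : coeff d f = 0 :=
  (PowerSeries.X_pow_dvd_iff.mp h) d hd

lemma X_pow_dvd_prod_sub_one (d : ℕ) (U : Finset ℕ) (h : ∀ m ∈ U, d < m) :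
    (X : PowerSeries ℤ) ^ (d + 1) ∣ (∏ m ∈ U, (1 - X ^ m)) - 1 := by
  induction U using Finset.induction with
  | empty => simp
  | @insert a U ha ih =>
    have h1 : ∀ m ∈ U, d < m := fun m hm => h m (Finset.mem_insert_of_mem hm)
    have h2 : d < a := h a (Finset.mem_insert_self a U)
    rw [Finset.prod_insert ha]
    have : (1 - (X : PowerSeries ℤ) ^ a) * ∏ m ∈ U, (1 - X ^ m) - 1 =
        ((∏ m ∈ U, (1 - X ^ m)) - 1) - X ^ a * ∏ m ∈ U, (1 - X ^ m) := by ring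
    rw [this]
    exact dvd_sub (ih h1) (Dvd.dvd.mul_right (pow_dvd_pow X h2) _)

lemma coeff_prod_stable (d : ℕ) {S T : Finset ℕ} (hST : S ⊆ T)
    (h : ∀ m ∈ T, m ∉ S → d < m) :
    coeff (R := ℤ) d (∏ m ∈ T, (1 - X ^ m)) = coeff (R := ℤ) d (∏ m ∈ S, (1 - X ^ m)) := by
  rw [← Finset.prod_sdiff hST]
  obtain ⟨g, hg⟩ := X_pow_dvd_prod_sub_one d (T \ S)
    (fun m hm => h m (Finset.mem_sdiff.mp hm).1 (Finset.mem_sdiff.mp hm).2)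
  have hprod : (∏ m ∈ T \ S, (1 - (X : PowerSeries ℤ) ^ m)) = 1 + X ^ (d + 1) * g := by
    rw [← hg]; ring
  rw [hprod, add_mul, one_mul, map_add]
  have : coeff d ((X : PowerSeries ℤ) ^ (d + 1) * g * ∏ m ∈ S, (1 - X ^ m)) = 0 := by
    rw [mul_assoc, mul_comm, PowerSeries.coeff_mul_X_pow']
    simp
  rw [this, add_zero]

noncomputable def sProdZ (P : ℕ → Prop) [DecidablePred P] : PowerSeries ℤ :=
  PowerSeries.mk fun d =>
    PowerSeries.coeff d (∏ m ∈ (Finset.range (d + 1)).filter P, (1 - PowerSeries.X ^ m))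

noncomputable def fZ (k j i l : ℕ) : PowerSeries ℤ :=
  (-1 : PowerSeries ℤ) ^ l *
    PowerSeries.X ^ ((2 * k + 1) * l.choose 2 + (k * (j + 1) + i) * l) *
    (∏ t ∈ Finset.Icc 1 j, (1 - PowerSeries.X ^ (l + t))) *
    (1 - PowerSeries.X ^ ((k - i + 1) * (2 * l + j + 1)))

noncomputable def NZ (k j i : ℕ) : PowerSeries ℤ :=
  PowerSeries.mk fun d => PowerSeries.coeff d (∑ l ∈ Finset.range (d + 1), fZ k j i l)

lemma map_sProdZ (P : ℕ → Prop) [DecidablePred P] :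
    PowerSeries.map (Int.castRingHom ℚ) (sProdZ P) = sProd P := by
  ext d
  rw [PowerSeries.coeff_map, sProdZ, sProd, coeff_mk, coeff_mk,
    ← PowerSeries.coeff_map]
  congr 1
  push_cast [map_prod]
  simp

lemma map_fZ (k j i l : ℕ) :
    PowerSeries.map (Int.castRingHom ℚ) (fZ k j i l) =
      (-1 : PowerSeries ℚ) ^ l *
        PowerSeries.X ^ ((2 * k + 1) * l.choose 2 + (k * (j + 1) + i) * l) *
        (∏ t ∈ Finset.Icc 1 j, (1 - PowerSeries.X ^ (l + t))) *
        (1 - PowerSeries.X ^ ((k - i + 1) * (2 * l + j + 1))) := by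
  simp [fZ, map_prod]

lemma map_NZ (k j i : ℕ) :
    PowerSeries.map (Int.castRingHom ℚ) (NZ k j i) = sSum (fun l =>
      (-1 : PowerSeries ℚ) ^ l *
        PowerSeries.X ^ ((2 * k + 1) * l.choose 2 + (k * (j + 1) + i) * l) *
        (∏ t ∈ Finset.Icc 1 j, (1 - PowerSeries.X ^ (l + t))) *
        (1 - PowerSeries.X ^ ((k - i + 1) * (2 * l + j + 1)))) := by
  ext d
  rw [PowerSeries.coeff_map, NZ, sSum, coeff_mk, coeff_mk]
  rw [show ∑ n ∈ Finset.range (d + 1), ((-1 : PowerSeries ℚ) ^ n *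
        PowerSeries.X ^ ((2 * k + 1) * n.choose 2 + (k * (j + 1) + i) * n) *
        (∏ t ∈ Finset.Icc 1 j, (1 - PowerSeries.X ^ (n + t))) *
        (1 - PowerSeries.X ^ ((k - i + 1) * (2 * n + j + 1)))) =
      ∑ n ∈ Finset.range (d + 1), PowerSeries.map (Int.castRingHom ℚ) (fZ k j i n) from
    Finset.sum_congr rfl (fun n _ => (map_fZ k j i n).symm)]
  rw [← map_sum, PowerSeries.coeff_map]

noncomputable def Qz (j : ℕ) : PowerSeries ℤ := sProdZ (fun m => j + 1 ≤ m)

noncomputable def Rz (j : ℕ) : PowerSeries ℤ := PowerSeries.invOfUnit (Qz j) 1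

lemma coeff_Qz (j d : ℕ) : coeff d (Qz j) =
    coeff d (∏ m ∈ (Finset.range (d + 1)).filter (fun m => j + 1 ≤ m), (1 - X ^ m)) := by
  rw [Qz, sProdZ, coeff_mk]

lemma Qz_zero (j : ℕ) : coeff 0 (Qz j) = 1 := by
  rw [coeff_Qz]
  have h : (Finset.range 1).filter (fun m => j + 1 ≤ m) = ∅ := by
    rw [Finset.filter_eq_empty_iff]
    intro m hm
    simp only [Finset.mem_range] at hm
    omega
  rw [h, Finset.prod_empty]
  simp

lemma Qz_mid (j d : ℕ) (h1 : 1 ≤ d) (h2 : d ≤ j) : coeff d (Qz j) = 0 := by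
  rw [coeff_Qz]
  have h : (Finset.range (d + 1)).filter (fun m => j + 1 ≤ m) = ∅ := by
    rw [Finset.filter_eq_empty_iff]
    intro m hm
    simp only [Finset.mem_range] at hm
    omega
  rw [h, Finset.prod_empty, PowerSeries.coeff_one, if_neg (by omega)]

lemma Qz_j1 (j : ℕ) : coeff (j + 1) (Qz j) = -1 := by
  rw [coeff_Qz]
  have h : (Finset.range (j + 2)).filter (fun m => j + 1 ≤ m) = {j + 1} := by
    ext m
    simp only [Finset.mem_filter, Finset.mem_range, Finset.mem_singleton]
    omega
  rw [h, Finset.prod_singleton, map_sub, PowerSeries.coeff_one,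
    PowerSeries.coeff_X_pow, if_neg (by omega), if_pos rfl]
  ring

lemma Qz_j2 (j : ℕ) : coeff (j + 2) (Qz j) = -1 := by
  rw [coeff_Qz]
  have h : (Finset.range (j + 3)).filter (fun m => j + 1 ≤ m) = {j + 1, j + 2} := by
    ext m
    simp only [Finset.mem_filter, Finset.mem_range, Finset.mem_insert, Finset.mem_singleton]
    omega
  rw [h, Finset.prod_insert (by simp), Finset.prod_singleton]
  have e : (1 - (X : PowerSeries ℤ) ^ (j + 1)) * (1 - X ^ (j + 2)) =
      1 - X ^ (j + 1) - X ^ (j + 2) + X ^ ((j + 1) + (j + 2)) := by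
    rw [pow_add]; ring
  rw [e, map_add, map_sub, map_sub, PowerSeries.coeff_one,
    PowerSeries.coeff_X_pow, PowerSeries.coeff_X_pow, PowerSeries.coeff_X_pow,
    if_neg (by omega), if_neg (by omega), if_pos rfl, if_neg (by omega)]
  ring

lemma Qz_mul_Rz (j : ℕ) : Qz j * Rz j = 1 := by
  apply PowerSeries.mul_invOfUnit
  rw [← PowerSeries.coeff_zero_eq_constantCoeff_apply, Qz_zero]
  simp

lemma coeff_mul_expand (f g : PowerSeries ℤ) (n : ℕ) :
    coeff n (f * g) = ∑ a ∈ Finset.range (n + 1), coeff a f * coeff (n - a) g := by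
  rw [PowerSeries.coeff_mul, Finset.Nat.sum_antidiagonal_eq_sum_range_succ_mk]

lemma Rz_zero (j : ℕ) : coeff 0 (Rz j) = 1 := by
  rw [PowerSeries.coeff_zero_eq_constantCoeff_apply, Rz,
    PowerSeries.constantCoeff_invOfUnit]
  simp

lemma Rz_mid (j d : ℕ) (h1 : 1 ≤ d) (h2 : d ≤ j) : coeff d (Rz j) = 0 := by
  have h := congrArg (coeff d) (Qz_mul_Rz j)
  rw [coeff_mul_expand, PowerSeries.coeff_one, if_neg (by omega)] at h
  rw [Finset.sum_eq_single 0 (fun b hb hb0 => by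
      rw [Qz_mid j b (by omega) (by simp only [Finset.mem_range] at hb; omega), zero_mul])
    (by simp)] at h
  rw [Qz_zero, one_mul, Nat.sub_zero] at h
  exact h

lemma Rz_j1 (j : ℕ) : coeff (j + 1) (Rz j) = 1 := by
  have h := congrArg (coeff (j + 1)) (Qz_mul_Rz j)
  rw [coeff_mul_expand, PowerSeries.coeff_one, if_neg (by omega),
    Finset.sum_range_succ] at h
  rw [Finset.sum_eq_single 0 (fun b hb hb0 => by
      rw [Qz_mid j b (by omega) (by simp only [Finset.mem_range] at hb; omega), zero_mul])
    (by simp)] at h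
  rw [Qz_zero, one_mul, Nat.sub_zero, Qz_j1, Nat.sub_self, Rz_zero] at h
  linarith

lemma Rz_j2 (j : ℕ) : coeff (j + 2) (Rz j) = 1 + coeff 1 (Rz j) := by
  have h := congrArg (coeff (j + 2)) (Qz_mul_Rz j)
  rw [coeff_mul_expand, PowerSeries.coeff_one, if_neg (by omega),
    show j + 2 + 1 = (j + 1) + 1 + 1 by omega,
    Finset.sum_range_succ, Finset.sum_range_succ] at h
  rw [Finset.sum_eq_single 0 (fun b hb hb0 => by
      rw [Qz_mid j b (by omega) (by simp only [Finset.mem_range] at hb; omega), zero_mul])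
    (by simp)] at h
  rw [Qz_zero, one_mul, Nat.sub_zero, Qz_j1, Qz_j2,
    show j + 2 - (j + 1) = 1 by omega, Nat.sub_self, Rz_zero] at h
  linarith

lemma Pz_zero : coeff 0 (sProdZ (fun m => 1 ≤ m)) = 1 := by
  rw [sProdZ, coeff_mk]
  have h : (Finset.range 1).filter (fun m => 1 ≤ m) = ∅ := by
    rw [Finset.filter_eq_empty_iff]
    intro m hm
    simp only [Finset.mem_range] at hm
    omega
  rw [h, Finset.prod_empty]
  simp

noncomputable def Sz : PowerSeries ℤ := PowerSeries.invOfUnit (sProdZ (fun m => 1 ≤ m)) 1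

lemma Pz_mul_Sz : sProdZ (fun m => 1 ≤ m) * Sz = 1 := by
  apply PowerSeries.mul_invOfUnit
  rw [← PowerSeries.coeff_zero_eq_constantCoeff_apply, Pz_zero]
  simp

lemma Pz_split (j : ℕ) : sProdZ (fun m => 1 ≤ m) =
    (∏ t ∈ Finset.Icc 1 j, (1 - (X : PowerSeries ℤ) ^ t)) * Qz j := by
  ext d
  rw [sProdZ, coeff_mk, PowerSeries.coeff_mul]
  have step1 : ∀ p ∈ Finset.HasAntidiagonal.antidiagonal d,
      coeff p.1 (∏ t ∈ Finset.Icc 1 j, (1 - (X : PowerSeries ℤ) ^ t)) * coeff p.2 (Qz j) =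
      coeff p.1 (∏ t ∈ Finset.Icc 1 j, (1 - (X : PowerSeries ℤ) ^ t)) *
        coeff p.2 (∏ m ∈ (Finset.range (d + 1)).filter (fun m => j + 1 ≤ m), (1 - X ^ m)) := by
    intro p hp
    have hp2 : p.2 ≤ d := by
      have := Finset.HasAntidiagonal.mem_antidiagonal.mp hp; omega
    rw [coeff_Qz]
    congr 1
    refine (coeff_prod_stable p.2 ?_ ?_).symm
    · intro m hm
      simp only [Finset.mem_filter, Finset.mem_range] at hm ⊢
      omega
    · intro m hm hm2
      simp only [Finset.mem_filter, Finset.mem_range] at hm hm2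
      omega
  rw [Finset.sum_congr rfl step1, ← PowerSeries.coeff_mul,
    ← Finset.prod_union (by
      rw [Finset.disjoint_left]
      intro m hm1 hm2
      simp only [Finset.mem_Icc] at hm1
      simp only [Finset.mem_filter, Finset.mem_range] at hm2
      omega)]
  refine (coeff_prod_stable d ?_ ?_).symm
  · intro m hm
    simp only [Finset.mem_filter, Finset.mem_range] at hm
    rcases le_or_gt m j with h | h
    · exact Finset.mem_union_left _ (Finset.mem_Icc.mpr ⟨hm.2, h⟩)
    · exact Finset.mem_union_right _ (by
        simp only [Finset.mem_filter, Finset.mem_range]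
        omega)
  · intro m hm hm2
    rcases Finset.mem_union.mp hm with h | h
    · simp only [Finset.mem_Icc] at h
      simp only [Finset.mem_filter, Finset.mem_range] at hm2
      omega
    · simp only [Finset.mem_filter, Finset.mem_range] at h hm2
      omega

lemma Sz_prod (j : ℕ) :
    (∏ t ∈ Finset.Icc 1 j, (1 - (X : PowerSeries ℤ) ^ t)) * Sz = Rz j := by
  have h1 := Pz_mul_Sz
  rw [Pz_split j] at h1
  calc (∏ t ∈ Finset.Icc 1 j, (1 - (X : PowerSeries ℤ) ^ t)) * Sz
      = ((∏ t ∈ Finset.Icc 1 j, (1 - (X : PowerSeries ℤ) ^ t)) * Sz) * (Qz j * Rz j) := by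
        rw [Qz_mul_Rz, mul_one]
    _ = (((∏ t ∈ Finset.Icc 1 j, (1 - (X : PowerSeries ℤ) ^ t)) * Qz j) * Sz) * Rz j := by
        ring
    _ = Rz j := by rw [h1, one_mul]

lemma coeff_NZ (k j i d : ℕ) (hk : 2 ≤ k) (hi : 1 ≤ i) (hd : d ≤ j + 2) :
    coeff d (NZ k j i) = coeff d (fZ k j i 0) := by
  rw [NZ, coeff_mk, map_sum]
  refine Finset.sum_eq_single 0 (fun l hl hl0 => ?_) (by simp)
  have e : fZ k j i l = ((-1 : PowerSeries ℤ) ^ l *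
      (∏ t ∈ Finset.Icc 1 j, (1 - PowerSeries.X ^ (l + t))) *
      (1 - PowerSeries.X ^ ((k - i + 1) * (2 * l + j + 1)))) *
      X ^ ((2 * k + 1) * l.choose 2 + (k * (j + 1) + i) * l) := by
    rw [fZ]; ring
  rw [e, PowerSeries.coeff_mul_X_pow', if_neg]
  have h1 : k * (j + 1) + i ≤ (k * (j + 1) + i) * l :=
    Nat.le_mul_of_pos_right _ (by omega)
  have h2 : 2 * (j + 1) ≤ k * (j + 1) := Nat.mul_le_mul_right _ hk
  intro hle
  have h3 : (k * (j + 1) + i) * l ≤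
      (2 * k + 1) * l.choose 2 + (k * (j + 1) + i) * l := Nat.le_add_left _ _
  omega

lemma coeff_G (k j i d : ℕ) (hk : 2 ≤ k) (hi : 1 ≤ i) (hd : d ≤ j + 2) :
    coeff d (Sz * NZ k j i) =
      coeff d (Rz j) - (if (k - i + 1) * (j + 1) ≤ d then
        coeff (d - (k - i + 1) * (j + 1)) (Rz j) else 0) := by
  have h1 : coeff d (Sz * NZ k j i) = coeff d (Sz * fZ k j i 0) := by
    rw [PowerSeries.coeff_mul, PowerSeries.coeff_mul]
    refine Finset.sum_congr rfl fun p hp => ?_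
    have hp2 : p.2 ≤ d := by
      have := Finset.HasAntidiagonal.mem_antidiagonal.mp hp; omega
    rw [coeff_NZ k j i p.2 hk hi (by omega)]
  have e : fZ k j i 0 = (∏ t ∈ Finset.Icc 1 j, (1 - (X : PowerSeries ℤ) ^ t)) *
      (1 - X ^ ((k - i + 1) * (j + 1))) := by
    rw [fZ]
    norm_num
  have h2 : Sz * fZ k j i 0 = Rz j * (1 - X ^ ((k - i + 1) * (j + 1))) := by
    rw [e, show Sz * ((∏ t ∈ Finset.Icc 1 j, (1 - (X : PowerSeries ℤ) ^ t)) *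
      (1 - X ^ ((k - i + 1) * (j + 1)))) =
      ((∏ t ∈ Finset.Icc 1 j, (1 - (X : PowerSeries ℤ) ^ t)) * Sz) *
      (1 - X ^ ((k - i + 1) * (j + 1))) from by ring, Sz_prod j]
  rw [h1, h2, mul_sub, mul_one, map_sub, PowerSeries.coeff_mul_X_pow']

lemma main_aux (k j i : ℕ) (hk : 2 ≤ k) (hi : 1 ≤ i) (hik : i ≤ k) :
    ∃ GZ : PowerSeries ℤ,
      GordonCf k j i = PowerSeries.map (Int.castRingHom ℚ) GZ ∧
      coeff 0 GZ = 1 ∧ (∀ d, 1 ≤ d → d ≤ j → coeff d GZ = 0) ∧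
      (i < k → coeff (j + 1) GZ = 1) ∧
      (i = k → coeff (j + 1) GZ = 0 ∧ coeff (j + 2) GZ = 1) := by
  have hM1 : 1 ≤ (k - i + 1) * (j + 1) := Nat.mul_pos (Nat.succ_pos _) (Nat.succ_pos _)
  have hMj : j + 1 ≤ (k - i + 1) * (j + 1) := Nat.le_mul_of_pos_left _ (Nat.succ_pos _)
  refine ⟨Sz * NZ k j i, ?_, ?_, ?_, ?_, ?_⟩
  · have hmap : PowerSeries.map (Int.castRingHom ℚ) (sProdZ (fun m => 1 ≤ m)) =
        sProd (fun m => 1 ≤ m) := map_sProdZ _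
    have hne : constantCoeff (sProd (fun m => 1 ≤ m)) ≠ 0 := by
      rw [← hmap, ← PowerSeries.coeff_zero_eq_constantCoeff_apply,
        PowerSeries.coeff_map, Pz_zero]
      norm_num
    have hinv : (sProd (fun m => 1 ≤ m))⁻¹ = PowerSeries.map (Int.castRingHom ℚ) Sz := by
      rw [PowerSeries.inv_eq_iff_mul_eq_one hne, ← hmap, ← map_mul,
        mul_comm Sz, Pz_mul_Sz, map_one]
    rw [GordonCf, hinv, ← map_NZ, ← map_mul]
  · rw [coeff_G k j i 0 hk hi (by omega), if_neg (by omega), Rz_zero, sub_zero]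
  · intro d hd1 hd2
    rw [coeff_G k j i d hk hi (by omega), if_neg (by omega), Rz_mid j d hd1 hd2, sub_zero]
  · intro hilt
    have h2 : 2 * (j + 1) ≤ (k - i + 1) * (j + 1) :=
      Nat.mul_le_mul_right _ (by omega)
    rw [coeff_G k j i (j + 1) hk hi (by omega), if_neg (by omega), Rz_j1, sub_zero]
  · intro hieq
    have hM : (k - i + 1) * (j + 1) = j + 1 := by
      rw [hieq, Nat.sub_self]; ring
    constructor
    · rw [coeff_G k j i (j + 1) hk hi (by omega), hM, if_pos le_rfl,
        Nat.sub_self, Rz_j1, Rz_zero, sub_self]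
    · rw [coeff_G k j i (j + 2) hk hi (by omega), hM, if_pos (by omega),
        show j + 2 - (j + 1) = 1 from by omega, Rz_j2]
      ring

end GordonAux

/-- The strengthened Empirical Hypothesis for the Gordon identities:
`G_{(k-1)j+i}(q) = 1 + q^{j+1} + (higher order terms)` with integer
coefficients for `1 ≤ i ≤ k-1`, and
`G_{(k-1)j+k}(q) = 1 + q^{j+2} + (higher order terms)`; in particular
`G_{(k-1)j+i}(q) - 1 ∈ q^{j+1} ℤ⟦q⟧` for `i < k` and `∈ q^{j+2} ℤ⟦q⟧` for `i = k`. -/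
theorem gordon_strong_EH (k j : ℕ) (hk : 2 ≤ k) :
    (∀ i, 1 ≤ i → i ≤ k - 1 → ∃ γ : PowerSeries ℤ,
      GordonCf k j i = 1 + PowerSeries.X ^ (j + 1) +
        PowerSeries.X ^ (j + 2) * PowerSeries.map (Int.castRingHom ℚ) γ) ∧
    (∃ γ : PowerSeries ℤ,
      GordonCf k j k = 1 + PowerSeries.X ^ (j + 2) +
        PowerSeries.X ^ (j + 3) * PowerSeries.map (Int.castRingHom ℚ) γ) := by
  constructor
  · intro i hi1 hik
    obtain ⟨GZ, hmap, h0, hmid, hlt, -⟩ :=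
      GordonAux.main_aux k j i hk hi1 (by omega)
    have hj1 := hlt (by omega)
    refine ⟨PowerSeries.mk (fun d => PowerSeries.coeff (d + (j + 2)) GZ), ?_⟩
    rw [hmap]
    ext d
    rw [PowerSeries.coeff_map, map_add, map_add, PowerSeries.coeff_one,
      PowerSeries.coeff_X_pow, mul_comm (PowerSeries.X ^ (j + 2)),
      PowerSeries.coeff_mul_X_pow']
    by_cases hd : j + 2 ≤ d
    · rw [if_pos hd, if_neg (by omega), if_neg (by omega), PowerSeries.coeff_map,
        PowerSeries.coeff_mk, show d - (j + 2) + (j + 2) = d from by omega]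
      ring
    · rw [if_neg hd]
      rcases Nat.eq_zero_or_pos d with h0d | h0d
      · subst h0d
        rw [h0, if_pos rfl, if_neg (by omega)]
        norm_num
      · by_cases hdj : d = j + 1
        · rw [hdj, hj1, if_neg (by omega), if_pos rfl]
          norm_num
        · rw [hmid d h0d (by omega), if_neg (by omega), if_neg hdj]
          norm_num
  · obtain ⟨GZ, hmap, h0, hmid, -, heq⟩ :=
      GordonAux.main_aux k j k hk (by omega) le_rfl
    obtain ⟨hj1, hj2⟩ := heq rfl
    refine ⟨PowerSeries.mk (fun d => PowerSeries.coeff (d + (j + 3)) GZ), ?_⟩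
    rw [hmap]
    ext d
    rw [PowerSeries.coeff_map, map_add, map_add, PowerSeries.coeff_one,
      PowerSeries.coeff_X_pow, mul_comm (PowerSeries.X ^ (j + 3)),
      PowerSeries.coeff_mul_X_pow']
    by_cases hd : j + 3 ≤ d
    · rw [if_pos hd, if_neg (by omega), if_neg (by omega), PowerSeries.coeff_map,
        PowerSeries.coeff_mk, show d - (j + 3) + (j + 3) = d from by omega]
      ring
    · rw [if_neg hd]
      rcases Nat.eq_zero_or_pos d with h0d | h0d
      · subst h0d
        rw [h0, if_pos rfl, if_neg (by omega)]
        norm_num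
      · by_cases hdj : d = j + 2
        · rw [hdj, hj2, if_neg (by omega), if_pos rfl]
          norm_num
        · by_cases hdj1 : d = j + 1
          · rw [hdj1, hj1, if_neg (by omega), if_neg (by omega)]
            norm_num
          · rw [hmid d h0d (by omega), if_neg (by omega), if_neg hdj]
            norm_num
end

section
/- Define J_{k,i}(a,x,q) as in Andrews (7.2.2) with a = 0: J_{k,i}(0,x,q) = ∑_{n≥0} (-1)^n x^{kn} q^{kn+kn^2+n−in+C(n,2)} (1 − x^i q^{i+2ni}) / ((q)_n (xq^{n+1})_∞), where (q)_n = (1−q)⋯(1−q^n) and (y)_∞ = ∏_{m≥0}(1−yq^m). Then for every j ≥ 0, J_{k,1}(0,q^j,q) = J_{k,k}(0,q^{j+1},q). -/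
open PowerSeries Finset

/-- Andrews's `J_{k,i}(0, x, q)` specialized at `x = q^j` (`1 ≤ i ≤ k`):
`J_{k,i}(0,q^j,q) = ∑_{n ≥ 0} (-1)^n q^{jkn} q^{kn+kn²+n-in+C(n,2)}
  (1 - q^{i(j+1)+2ni}) / ((q)_n (q^{j+n+1})_∞)`,
where the exponent `kn+kn²+n-in+C(n,2)` is expressed with the (nonnegative)
natural-number subtraction `kn+kn²+n+C(n,2) - in`, valid since `i ≤ k`. -/
noncomputable def Jspec (k i j : ℕ) : PowerSeries ℚ :=
  sSum (fun n =>
    (-1 : PowerSeries ℚ) ^ n *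
    PowerSeries.X ^ (j * k * n + (k * n + k * n ^ 2 + n + n.choose 2 - i * n)) *
    (1 - PowerSeries.X ^ (i * (j + 1) + 2 * n * i)) *
    (∏ t ∈ Finset.Icc 1 n, (1 - PowerSeries.X ^ t))⁻¹ *
    (sProd (fun m => j + n + 1 ≤ m))⁻¹)

/-! ### Auxiliary infrastructure -/

private lemma coeff_eq_of_dvd {A B : PowerSeries ℚ} {d : ℕ}
    (h : (X : PowerSeries ℚ) ^ (d + 1) ∣ A - B) :
    PowerSeries.coeff d A = PowerSeries.coeff d B := by
  have h2 := PowerSeries.X_pow_dvd_iff.mp h d (Nat.lt_succ_self d)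
  rwa [map_sub, sub_eq_zero] at h2

private lemma prod_sub_one_dvd {N : ℕ} (S : Finset ℕ) :
    (∀ m ∈ S, N ≤ m) → (X : PowerSeries ℚ) ^ N ∣ (∏ m ∈ S, (1 - X ^ m)) - 1 := by
  classical
  induction S using Finset.induction_on with
  | empty => intro _; simp
  | @insert a s ha ih =>
    intro h
    rw [Finset.prod_insert ha]
    have hX : (X : PowerSeries ℚ) ^ N ∣ X ^ a :=
      pow_dvd_pow X (h a (Finset.mem_insert_self a s))
    have hs := ih (fun m hm => h m (Finset.mem_insert_of_mem hm))
    have hr : (1 - X ^ a) * (∏ m ∈ s, (1 - (X : PowerSeries ℚ) ^ m)) - 1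
        = (1 - X ^ a) * ((∏ m ∈ s, (1 - X ^ m)) - 1) - X ^ a := by ring
    rw [hr]
    exact dvd_sub (hs.mul_left _) hX

private lemma sProd_coeff (P : ℕ → Prop) [DecidablePred P] {d M : ℕ} (h : d < M) :
    PowerSeries.coeff d (sProd P)
      = PowerSeries.coeff d (∏ m ∈ (Finset.range M).filter P, (1 - X ^ m)) := by
  rw [sProd, coeff_mk]
  apply coeff_eq_of_dvd
  have hsub : (Finset.range (d + 1)).filter P ⊆ (Finset.range M).filter P :=
    Finset.filter_subset_filter P (Finset.range_subset_range.2 h)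
  rw [← Finset.prod_sdiff hsub]
  have hd : (X : PowerSeries ℚ) ^ (d + 1) ∣
      (∏ m ∈ (Finset.range M).filter P \ (Finset.range (d + 1)).filter P, (1 - X ^ m)) - 1 := by
    apply prod_sub_one_dvd
    intro m hm
    simp only [Finset.mem_sdiff, Finset.mem_filter, Finset.mem_range] at hm
    obtain ⟨⟨_, hPm⟩, hnot⟩ := hm
    exact Nat.le_of_not_lt fun hlt => hnot ⟨hlt, hPm⟩
  have hr : (∏ m ∈ (Finset.range (d + 1)).filter P, (1 - (X : PowerSeries ℚ) ^ m))
        - (∏ m ∈ (Finset.range M).filter P \ (Finset.range (d + 1)).filter P, (1 - X ^ m)) *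
            (∏ m ∈ (Finset.range (d + 1)).filter P, (1 - X ^ m))
      = -(((∏ m ∈ (Finset.range M).filter P \ (Finset.range (d + 1)).filter P, (1 - X ^ m)) - 1) *
            (∏ m ∈ (Finset.range (d + 1)).filter P, (1 - X ^ m))) := by ring
  rw [hr]
  exact (hd.mul_right _).neg_right

private lemma sProd_sub_dvd (P : ℕ → Prop) [DecidablePred P] (d : ℕ) :
    (X : PowerSeries ℚ) ^ (d + 1) ∣
      sProd P - ∏ m ∈ (Finset.range (d + 1)).filter P, (1 - X ^ m) := by
  rw [PowerSeries.X_pow_dvd_iff]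
  intro m hm
  rw [map_sub, sub_eq_zero, sProd_coeff P hm]

private lemma coeff_mul_right_congr {C A B : PowerSeries ℚ} {d : ℕ}
    (h : (X : PowerSeries ℚ) ^ (d + 1) ∣ A - B) :
    PowerSeries.coeff d (C * A) = PowerSeries.coeff d (C * B) :=
  coeff_eq_of_dvd (by rw [← mul_sub]; exact h.mul_left C)

private lemma sProd_succ (s : ℕ) :
    sProd (fun m => s ≤ m) = (1 - X ^ s) * sProd (fun m => s + 1 ≤ m) := by
  ext d
  have h2 : PowerSeries.coeff d ((1 - X ^ s) * sProd (fun m => s + 1 ≤ m))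
      = PowerSeries.coeff d
          ((1 - X ^ s) * ∏ m ∈ (Finset.range (d + 1)).filter (fun m => s + 1 ≤ m), (1 - X ^ m)) :=
    coeff_mul_right_congr (sProd_sub_dvd _ d)
  rw [h2, sProd_coeff (fun m => s ≤ m) (Nat.lt_succ_self d)]
  by_cases hs : s ≤ d
  · have hins : (Finset.range (d + 1)).filter (fun m => s ≤ m)
        = insert s ((Finset.range (d + 1)).filter (fun m => s + 1 ≤ m)) := by
      ext m
      simp only [Finset.mem_filter, Finset.mem_range, Finset.mem_insert]
      omega
    rw [hins, Finset.prod_insert (by simp)]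
  · have h1 : (Finset.range (d + 1)).filter (fun m => s ≤ m) = ∅ := by
      ext m; simp only [Finset.mem_filter, Finset.mem_range, Finset.notMem_empty, iff_false,
        not_and]; omega
    have hb : (Finset.range (d + 1)).filter (fun m => s + 1 ≤ m) = ∅ := by
      ext m; simp only [Finset.mem_filter, Finset.mem_range, Finset.notMem_empty, iff_false,
        not_and]; omega
    rw [h1, hb, Finset.prod_empty, mul_one, map_sub,
      PowerSeries.coeff_X_pow, if_neg (by omega : d ≠ s), sub_zero]

private lemma constCoeff_one_sub_X_pow {m : ℕ} (hm : 1 ≤ m) :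
    PowerSeries.constantCoeff (R := ℚ) (1 - X ^ m) = 1 := by
  rw [map_sub, map_one, map_pow, PowerSeries.constantCoeff_X,
    zero_pow (by omega : m ≠ 0), sub_zero]

/-- `(q^s)_∞⁻¹`. -/
private noncomputable def Pinv (s : ℕ) : PowerSeries ℚ := (sProd (fun m => s ≤ m))⁻¹

/-- `(q)_n⁻¹`. -/
private noncomputable def Dinv (n : ℕ) : PowerSeries ℚ :=
  (∏ t ∈ Finset.Icc 1 n, (1 - (X : PowerSeries ℚ) ^ t))⁻¹

private lemma Pinv_succ (s : ℕ) (hs : 1 ≤ s) :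
    (1 - X ^ s) * Pinv s = Pinv (s + 1) := by
  have h0 : PowerSeries.constantCoeff (R := ℚ) (1 - X ^ s) ≠ 0 := by
    rw [constCoeff_one_sub_X_pow hs]; exact one_ne_zero
  unfold Pinv
  rw [sProd_succ s, PowerSeries.mul_inv_rev, ← mul_assoc,
    mul_comm (1 - X ^ s) ((sProd fun m => s + 1 ≤ m)⁻¹), mul_assoc,
    PowerSeries.mul_inv_cancel _ h0, mul_one]

private lemma Dinv_succ (n : ℕ) :
    (1 - X ^ (n + 1)) * Dinv (n + 1) = Dinv n := by
  have h0 : PowerSeries.constantCoeff (R := ℚ) (1 - X ^ (n + 1)) ≠ 0 := by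
    rw [constCoeff_one_sub_X_pow (by omega)]; exact one_ne_zero
  have hins : Finset.Icc 1 (n + 1) = insert (n + 1) (Finset.Icc 1 n) := by
    ext m; simp only [Finset.mem_Icc, Finset.mem_insert]; omega
  unfold Dinv
  rw [hins, Finset.prod_insert (by simp), PowerSeries.mul_inv_rev, ← mul_assoc,
    mul_comm (1 - X ^ (n + 1)) ((∏ t ∈ Finset.Icc 1 n, (1 - (X : PowerSeries ℚ) ^ t))⁻¹),
    mul_assoc, PowerSeries.mul_inv_cancel _ h0, mul_one]

/-- The telescoping series. -/
private noncomputable def hh (k j n : ℕ) : PowerSeries ℚ :=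
  (-1 : PowerSeries ℚ) ^ n * X ^ (j * k * n + k * n + k * n ^ 2 + n.choose 2) *
    (1 - X ^ n) * Dinv n * Pinv (j + n + 1)

private lemma hh_zero (k j : ℕ) : hh k j 0 = 0 := by
  simp [hh]

private lemma hh_coeff (k j : ℕ) (hk : 1 ≤ k) (d : ℕ) :
    PowerSeries.coeff d (hh k j (d + 1)) = 0 := by
  have h1 : d + 1 ≤ k * (d + 1) := Nat.le_mul_of_pos_left _ (by omega)
  have hle : d + 1 ≤ j * k * (d + 1) + k * (d + 1) + k * (d + 1) ^ 2 + (d + 1).choose 2 :=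
    le_trans h1 (le_trans (Nat.le_add_left _ _)
      (le_trans (Nat.le_add_right _ _) (Nat.le_add_right _ _)))
  have hdvd : (X : PowerSeries ℚ) ^ (d + 1) ∣ hh k j (d + 1) := by
    unfold hh
    exact (((pow_dvd_pow X hle).mul_left _).mul_right _).mul_right _ |>.mul_right _
  exact PowerSeries.X_pow_dvd_iff.mp hdvd d (Nat.lt_succ_self d)

private lemma term_eq (k j n : ℕ) :
    (-1 : PowerSeries ℚ) ^ n * X ^ (j * k * n + k * n + k * n ^ 2 + n.choose 2) *
        (1 - X ^ (j + 2 * n + 1)) * Dinv n * Pinv (j + n + 1) + hh k j (n + 1)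
      = (-1 : PowerSeries ℚ) ^ n * X ^ (j * k * n + k * n + k * n ^ 2 + n.choose 2 + n) *
          (1 - X ^ (k * j + 2 * k + 2 * n * k)) * Dinv n * Pinv (j + n + 2) + hh k j n := by
  have hP : (1 - X ^ (j + n + 1)) * Pinv (j + n + 1) = Pinv (j + n + 2) :=
    Pinv_succ (j + n + 1) (by omega)
  have hD : (1 - X ^ (n + 1)) * Dinv (n + 1) = Dinv n := Dinv_succ n
  have hch : (n + 1).choose 2 = n.choose 1 + n.choose 2 := rfl
  unfold hh
  rw [show j + (n + 1) + 1 = j + n + 2 from by omega]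
  rw [show j * k * (n + 1) + k * (n + 1) + k * (n + 1) ^ 2 + (n + 1).choose 2
        = j * k * n + k * n + k * n ^ 2 + n.choose 2 + (n + (k * j + 2 * k + 2 * n * k)) from by
      rw [hch, Nat.choose_one_right]; ring]
  rw [← hP, ← hD]
  ring

private lemma sSum_eq (f g h : ℕ → PowerSeries ℚ)
    (hterm : ∀ n, f n + h (n + 1) = g n + h n) (h0 : h 0 = 0)
    (hord : ∀ d, PowerSeries.coeff d (h (d + 1)) = 0) : sSum f = sSum g := by
  ext d
  rw [sSum, sSum, coeff_mk, coeff_mk]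
  have hs : ∑ n ∈ Finset.range (d + 1), f n
      = ∑ n ∈ Finset.range (d + 1), g n + (h 0 - h (d + 1)) := by
    rw [← Finset.sum_range_sub' h (d + 1), ← Finset.sum_add_distrib]
    exact Finset.sum_congr rfl fun n _ => by linear_combination hterm n
  rw [hs, h0, map_add, map_sub, map_zero, hord d]
  ring

private lemma JspecL (k j : ℕ) :
    Jspec k 1 j = sSum (fun n =>
      (-1 : PowerSeries ℚ) ^ n * X ^ (j * k * n + k * n + k * n ^ 2 + n.choose 2) *
        (1 - X ^ (j + 2 * n + 1)) * Dinv n * Pinv (j + n + 1)) := by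
  unfold Jspec
  refine congrArg sSum (funext fun n => ?_)
  have e1 : j * k * n + (k * n + k * n ^ 2 + n + n.choose 2 - 1 * n)
      = j * k * n + k * n + k * n ^ 2 + n.choose 2 := by
    generalize j * k * n = E
    generalize k * n ^ 2 = B
    generalize k * n = A
    generalize n.choose 2 = C
    omega
  have e2 : 1 * (j + 1) + 2 * n * 1 = j + 2 * n + 1 := by ring
  rw [e1, e2]
  rfl

private lemma JspecR (k j : ℕ) :
    Jspec k k (j + 1) = sSum (fun n =>
      (-1 : PowerSeries ℚ) ^ n * X ^ (j * k * n + k * n + k * n ^ 2 + n.choose 2 + n) *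
        (1 - X ^ (k * j + 2 * k + 2 * n * k)) * Dinv n * Pinv (j + n + 2)) := by
  unfold Jspec
  refine congrArg sSum (funext fun n => ?_)
  have h1 : (j + 1) * k * n = j * k * n + k * n := by ring
  have e1 : (j + 1) * k * n + (k * n + k * n ^ 2 + n + n.choose 2 - k * n)
      = j * k * n + k * n + k * n ^ 2 + n.choose 2 + n := by
    rw [h1]
    generalize j * k * n = E
    generalize k * n ^ 2 = B
    generalize k * n = A
    generalize n.choose 2 = C
    omega
  have e2 : k * (j + 1 + 1) + 2 * n * k = k * j + 2 * k + 2 * n * k := by ring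
  rw [e1, e2, show j + 1 + n + 1 = j + n + 2 from by omega]
  rfl

/-- Edge-matching for Andrews's specialized `J`-functions:
`J_{k,1}(0, q^j, q) = J_{k,k}(0, q^{j+1}, q)` for every `j ≥ 0`. -/
theorem Jspec_edge_matching (k : ℕ) (hk : 2 ≤ k) (j : ℕ) :
    Jspec k 1 j = Jspec k k (j + 1) := by
  rw [JspecL k j, JspecR k j]
  exact sSum_eq _ _ (hh k j) (term_eq k j) (hh_zero k j) (hh_coeff k j (by omega))
end
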